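/- Let [n] = R ∪ S ∪ T be a partition with S nonempty and suppose H̃_p(Δ_R^{S,T}) ≠ 0. Then for any S' ⊆ S there exist R' ⊇ R and T' ⊇ T such that H̃_{p'}(Δ_{R'}^{S',T'}) ≠ 0, where p' - p = |R'\R|. -/

import Mathlib

open Finset

namespace SCx

variable (k : Type) [Field k] {n : ℕ}

/-- An (abstract) simplicial complex on the vertex set `Fin n`:
a set of finsets closed under taking subsets. -/
def IsComplex (Δ : Set (Finset (Fin n))) : Prop :=
  ∀ F ∈ Δ, ∀ G ⊆ F, G ∈ Δ

/-- Simplicial `p`-chains with coefficients in `k`: functions on the faces of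
cardinality `p+1`. -/
abbrev Chains (Δ : Set (Finset (Fin n))) (p : ℤ) : Type :=
  {F : Finset (Fin n) // F ∈ Δ ∧ (F.card : ℤ) = p + 1} → k

open Classical in
/-- The underlying function of the simplicial boundary map, written via its
transpose formula:
`(∂ f) G = ∑_{x : insert x G ∈ Δ} (-1)^{pos of x in insert x G} f (insert x G)`. -/
noncomputable def boundaryFun (Δ : Set (Finset (Fin n))) (p : ℤ)
    (f : Chains k Δ p) : Chains k Δ (p - 1) := fun G => ∑ x : Fin n,
  if h : x ∉ G.1 ∧ insert x G.1 ∈ Δ then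
    (-1 : k) ^ (G.1.filter (fun y => y < x)).card *
      f ⟨insert x G.1, h.2, by
        have hc := G.2.2
        rw [Finset.card_insert_of_notMem h.1]
        push_cast at hc ⊢
        omega⟩
  else 0

/-- The simplicial boundary map. -/
noncomputable def boundary (Δ : Set (Finset (Fin n))) (p : ℤ) :
    Chains k Δ p →ₗ[k] Chains k Δ (p - 1) where
  toFun := boundaryFun k Δ p
  map_add' f g := by
    funext G
    unfold boundaryFun
    rw [Pi.add_apply]
    rw [← Finset.sum_add_distrib]
    refine Finset.sum_congr rfl fun x _ => ?_
    split_ifs with h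
    · rw [Pi.add_apply]; ring
    · rw [add_zero]
  map_smul' c f := by
    funext G
    unfold boundaryFun
    simp only [RingHom.id_apply, Pi.smul_apply, smul_eq_mul, Finset.mul_sum]
    refine Finset.sum_congr rfl fun x _ => ?_
    split_ifs with h
    · ring
    · rw [mul_zero]

/-- Transport of chains along an equality of degrees. -/
noncomputable def chainsCongr (Δ : Set (Finset (Fin n))) {p q : ℤ} (h : p = q) :
    Chains k Δ p ≃ₗ[k] Chains k Δ q := by
  subst h; exact LinearEquiv.refl k _

noncomputable def cycles (Δ : Set (Finset (Fin n))) (p : ℤ) : Submodule k (Chains k Δ p) :=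
  LinearMap.ker (boundary k Δ p)

noncomputable def boundaries (Δ : Set (Finset (Fin n))) (p : ℤ) : Submodule k (Chains k Δ p) :=
  LinearMap.range ((chainsCongr k Δ (show p + 1 - 1 = p by ring)).toLinearMap ∘ₗ
    boundary k Δ (p + 1))

/-- Reduced simplicial homology of `Δ` in degree `p`, with coefficients in the field `k`,
defined as cycles modulo (boundaries intersected with cycles).  With this convention
`H̃_{-1}({∅}) = k`. -/
abbrev ReducedHomology (Δ : Set (Finset (Fin n))) (p : ℤ) :=
  ↥(cycles k Δ p) ⧸ (Submodule.comap (cycles k Δ p).subtype (boundaries k Δ p))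

/-- The Alexander dual of `Δ`. -/
def dual (Δ : Set (Finset (Fin n))) : Set (Finset (Fin n)) := {F | Fᶜ ∉ Δ}

/-- The restriction `Δ_R` of `Δ` to a vertex subset `R`. -/
def restrict (Δ : Set (Finset (Fin n))) (R : Finset (Fin n)) : Set (Finset (Fin n)) :=
  {F | F ∈ Δ ∧ F ⊆ R}

/-- The link `lk_Δ S`. -/
def link (Δ : Set (Finset (Fin n))) (S : Finset (Fin n)) : Set (Finset (Fin n)) :=
  {F | Disjoint F S ∧ F ∪ S ∈ Δ}

/-- `Δ_R^{S,T} = {F ⊆ R : F ∪ S ∈ Δ}` (for `T` the complement of `R ∪ S`). -/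
def sub (Δ : Set (Finset (Fin n))) (R S : Finset (Fin n)) : Set (Finset (Fin n)) :=
  {F | F ⊆ R ∧ F ∪ S ∈ Δ}

/-- `Δ` has dimension `d - 1`, i.e. `d` is the maximal cardinality of a face. -/
def IsDim (Δ : Set (Finset (Fin n))) (d : ℕ) : Prop :=
  (∀ F ∈ Δ, F.card ≤ d) ∧ ∃ F ∈ Δ, F.card = d

/-- `Δ` has frame dimension `c - 1`, i.e. `c` is the largest integer such that
every `c`-subset of `[n]` is a face of `Δ`. -/
def IsFrame (Δ : Set (Finset (Fin n))) (c : ℕ) : Prop :=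
  (∀ F : Finset (Fin n), F.card ≤ c → F ∈ Δ) ∧
    ∃ F : Finset (Fin n), F.card = c + 1 ∧ F ∉ Δ

/-- A facet: a maximal face. -/
def IsFacet (Δ : Set (Finset (Fin n))) (F : Finset (Fin n)) : Prop :=
  F ∈ Δ ∧ ∀ G ∈ Δ, F ⊆ G → F = G

section Aux
set_option linter.unusedSectionVars false

variable {k : Type} [Field k] {n : ℕ}

lemma chain_congr {Δ : Set (Finset (Fin n))} {p : ℤ} (f : Chains k Δ p)
    {F G : Finset (Fin n)} (h : F = G)
    {hF : F ∈ Δ ∧ (F.card : ℤ) = p + 1} {hG : G ∈ Δ ∧ (G.card : ℤ) = p + 1} :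
    f ⟨F, hF⟩ = f ⟨G, hG⟩ := by subst h; rfl

lemma chainsCongr_apply {Δ : Set (Finset (Fin n))} {p q : ℤ} (h : p = q)
    (f : Chains k Δ p) (F : Finset (Fin n)) (hF : F ∈ Δ) (hc : (F.card : ℤ) = q + 1) :
    chainsCongr k Δ h f ⟨F, hF, hc⟩ = f ⟨F, hF, by rw [h]; exact hc⟩ := by
  subst h; rfl

lemma exists_cycle_of_not_subsingleton {Δ : Set (Finset (Fin n))} {p : ℤ}
    (h : ¬ Subsingleton (ReducedHomology k Δ p)) :
    ∃ z : Chains k Δ p, boundary k Δ p z = 0 ∧ z ∉ boundaries k Δ p := by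
  by_contra hc
  push_neg at hc
  apply h
  rw [Submodule.Quotient.subsingleton_iff, Submodule.eq_top_iff']
  rintro ⟨z, hz⟩
  exact hc z (LinearMap.mem_ker.mp hz)

lemma not_subsingleton_of_cycle {Δ : Set (Finset (Fin n))} {p : ℤ}
    (z : Chains k Δ p) (hz : boundary k Δ p z = 0) (hzb : z ∉ boundaries k Δ p) :
    ¬ Subsingleton (ReducedHomology k Δ p) := by
  rw [Submodule.Quotient.subsingleton_iff, Submodule.eq_top_iff']
  intro hall
  exact hzb (hall ⟨z, LinearMap.mem_ker.mpr hz⟩)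

lemma mem_boundaries_iff {Δ : Set (Finset (Fin n))} {p : ℤ} (z : Chains k Δ p) :
    z ∈ boundaries k Δ p ↔ ∃ c : Chains k Δ (p + 1),
      chainsCongr k Δ (show p + 1 - 1 = p by ring) (boundary k Δ (p + 1) c) = z := by
  simp [boundaries, LinearMap.mem_range]

/-- sign of inserting `v` -/
def epsk (k : Type) [Field k] {n : ℕ} (v : Fin n) (F : Finset (Fin n)) : k :=
  (-1) ^ (F.filter (fun y => y < v)).card

lemma epsk_mul_self (v : Fin n) (F : Finset (Fin n)) : epsk k v F * epsk k v F = 1 := by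
  unfold epsk
  rw [← pow_add]
  exact Even.neg_one_pow ⟨_, rfl⟩

open Classical in
lemma sign_insert {v x : Fin n} (hxv : x ≠ v) {A : Finset (Fin n)} (hvA : v ∉ A) (hxA : x ∉ A) :
    ((-1 : k) ^ ((insert v A).filter (fun y => y < x)).card) * epsk k v (insert x A)
      = -(((-1 : k) ^ (A.filter (fun y => y < x)).card) * epsk k v A) := by
  unfold epsk
  rcases lt_or_gt_of_ne hxv with hlt | hlt
  · rw [Finset.filter_insert, if_neg (not_lt.mpr hlt.le), Finset.filter_insert, if_pos hlt,
      Finset.card_insert_of_notMem (by simp [hxA]), pow_succ]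
    ring
  · rw [Finset.filter_insert, if_pos hlt, Finset.filter_insert, if_neg (not_lt.mpr hlt.le),
      Finset.card_insert_of_notMem (by simp [hvA]), pow_succ]
    ring

lemma union_insert_eq (v : Fin n) (F S₀ : Finset (Fin n)) :
    insert v F ∪ S₀ = F ∪ insert v S₀ := by
  ext a; simp [Finset.mem_insert, Finset.mem_union]

variable {Δ : Set (Finset (Fin n))} {R S₀ : Finset (Fin n)} {v : Fin n}

lemma memE_iff_memD {F : Finset (Fin n)} (hvF : v ∉ F) :
    F ∈ sub Δ (insert v R) S₀ ↔ F ∈ sub Δ R S₀ := by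
  unfold sub
  simp only [Set.mem_setOf_eq]
  rw [Finset.subset_insert_iff_of_notMem hvF]

lemma insert_memE_iff {F : Finset (Fin n)} (hvF : v ∉ F) :
    insert v F ∈ sub Δ (insert v R) S₀ ↔ F ∈ sub Δ R (insert v S₀) := by
  unfold sub
  simp only [Set.mem_setOf_eq]
  rw [union_insert_eq, Finset.insert_subset_iff,
    Finset.subset_insert_iff_of_notMem hvF]
  simp

lemma gamma_sub_D (hΔ : IsComplex Δ) {F : Finset (Fin n)}
    (hF : F ∈ sub Δ R (insert v S₀)) : F ∈ sub Δ R S₀ :=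
  ⟨hF.1, hΔ _ hF.2 _ (Finset.union_subset_union_right (Finset.subset_insert _ _))⟩

lemma not_mem_of_gamma (hvR : v ∉ R) {F : Finset (Fin n)}
    (hF : F ∈ sub Δ R (insert v S₀)) : v ∉ F := fun hv => hvR (hF.1 hv)

end Aux

section Cone
set_option linter.unusedSectionVars false
variable {k : Type} [Field k] {n : ℕ}
variable (Δ : Set (Finset (Fin n))) (R S₀ : Finset (Fin n)) (v : Fin n)

open Classical in
/-- extract the `v`-part of a chain on `E = sub Δ (insert v R) S₀` as a chain on
`Γ = sub Δ R (insert v S₀)`, one degree lower. -/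
noncomputable def psi (hvR : v ∉ R) (q r : ℤ) (hqr : q = r + 1)
    (c : Chains k (sub Δ (insert v R) S₀) q) : Chains k (sub Δ R (insert v S₀)) r :=
  fun F => epsk k v F.1 * c ⟨insert v F.1,
    (insert_memE_iff (fun hvF => hvR (F.2.1.1 hvF))).mpr F.2.1,
    by
      have hvF : v ∉ F.1 := fun hvF => hvR (F.2.1.1 hvF)
      have h2 := F.2.2
      rw [Finset.card_insert_of_notMem hvF]
      push_cast
      omega⟩

open Classical in
lemma boundary_vface (hvR : v ∉ R) (q r : ℤ) (hqr : q = r + 1)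
    (c : Chains k (sub Δ (insert v R) S₀) q)
    (G : Finset (Fin n)) (hG : G ∈ sub Δ (insert v R) S₀)
    (hGc : (G.card : ℤ) = (q - 1) + 1) (hvG : v ∈ G)
    (hA : G.erase v ∈ sub Δ R (insert v S₀))
    (hAc : (((G.erase v).card : ℕ) : ℤ) = (r - 1) + 1) :
    boundary k (sub Δ (insert v R) S₀) q c ⟨G, hG, hGc⟩ =
      -(epsk k v (G.erase v) *
        boundary k (sub Δ R (insert v S₀)) r (psi Δ R S₀ v hvR q r hqr c)
          ⟨G.erase v, hA, hAc⟩) := by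
  show boundaryFun k _ q c ⟨G, hG, hGc⟩ =
    -(epsk k v (G.erase v) * boundaryFun k _ r (psi Δ R S₀ v hvR q r hqr c) ⟨G.erase v, hA, hAc⟩)
  unfold boundaryFun
  rw [Finset.mul_sum, ← Finset.sum_neg_distrib]
  refine Finset.sum_congr rfl fun x _ => ?_
  by_cases hxv : x = v
  · subst hxv
    rw [dif_neg (fun h => h.1 hvG),
      dif_neg (fun h => hvR (h.2.1 (Finset.mem_insert_self x _)))]
    simp
  · have hins : insert v (insert x (G.erase v)) = insert x G := by
      rw [Finset.insert_comm, Finset.insert_erase hvG]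
    have hvxA : v ∉ insert x (G.erase v) := by
      simp [Finset.mem_insert, Ne.symm hxv]
    have hcond : (x ∉ G ∧ insert x G ∈ sub Δ (insert v R) S₀) ↔
        (x ∉ G.erase v ∧ insert x (G.erase v) ∈ sub Δ R (insert v S₀)) := by
      constructor
      · rintro ⟨h1, h2⟩
        refine ⟨by simp [Finset.mem_erase, h1], ?_⟩
        rw [← insert_memE_iff hvxA, hins]
        exact h2
      · rintro ⟨h1, h2⟩
        have h1' : x ∉ G := fun hx => h1 (Finset.mem_erase.mpr ⟨hxv, hx⟩)
        refine ⟨h1', ?_⟩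
        rw [← hins]
        exact (insert_memE_iff hvxA).mpr h2
    by_cases hc2 : x ∉ G.erase v ∧ insert x (G.erase v) ∈ sub Δ R (insert v S₀)
    · rw [dif_pos (hcond.mpr hc2), dif_pos hc2]
      simp only [psi]
      rw [chain_congr c hins.symm (hG := ⟨by rw [hins]; exact (hcond.mpr hc2).2,
        by rw [hins, Finset.card_insert_of_notMem (hcond.mpr hc2).1]; push_cast; omega⟩)]
      have key := sign_insert (k := k) hxv (Finset.notMem_erase v G) hc2.1
      rw [Finset.insert_erase hvG] at key
      set a := (-1:k) ^ (Finset.filter (fun y => y < x) G).card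
      set b := (-1:k) ^ (Finset.filter (fun y => y < x) (G.erase v)).card
      have h3 := epsk_mul_self (k := k) v (insert x (G.erase v))
      set e1 := epsk k v (insert x (G.erase v))
      set e0 := epsk k v (G.erase v)
      set t := c ⟨insert v (insert x (G.erase v)),
        by rw [hins]; exact (hcond.mpr hc2).2,
        by rw [hins, Finset.card_insert_of_notMem (hcond.mpr hc2).1]; push_cast; omega⟩
      linear_combination (e1 * t) * key - (a * t) * h3
    · rw [dif_neg (fun h => hc2 (hcond.mp h)), dif_neg hc2]
      simp

end Cone

section Step
set_option linter.unusedSectionVars false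
set_option maxHeartbeats 1000000
variable {k : Type} [Field k] {n : ℕ}

lemma sub_isComplex {Δ : Set (Finset (Fin n))} (hΔ : IsComplex Δ) (R S : Finset (Fin n)) :
    IsComplex (sub Δ R S) := by
  intro F hF G hG
  exact ⟨hG.trans hF.1, hΔ _ hF.2 _ (Finset.union_subset_union_left hG)⟩

open Classical in
lemma step (Δ : Set (Finset (Fin n))) (hΔ : IsComplex Δ) (R S₀ : Finset (Fin n)) (v : Fin n)
    (hvR : v ∉ R) (p : ℤ)
    (h : ¬ Subsingleton (ReducedHomology k (sub Δ R (insert v S₀)) p)) :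
    ¬ Subsingleton (ReducedHomology k (sub Δ R S₀) p) ∨
      ¬ Subsingleton (ReducedHomology k (sub Δ (insert v R) S₀) (p + 1)) := by
  obtain ⟨z, hz, hzb⟩ := exists_cycle_of_not_subsingleton h
  set iz : Chains k (sub Δ R S₀) p := fun G =>
    if hG : G.1 ∈ sub Δ R (insert v S₀) then z ⟨G.1, hG, G.2.2⟩ else 0 with hiz_def
  have hizcyc : boundary k (sub Δ R S₀) p iz = 0 := by
    refine funext fun G => ?_
    show boundaryFun k (sub Δ R S₀) p iz G = 0
    by_cases hGΓ : G.1 ∈ sub Δ R (insert v S₀)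
    · have hz' : boundaryFun k (sub Δ R (insert v S₀)) p z = 0 := hz
      have hzG := congrFun hz' ⟨G.1, hGΓ, G.2.2⟩
      rw [Pi.zero_apply] at hzG
      rw [← hzG]
      show boundaryFun k _ p iz G = boundaryFun k _ p z ⟨G.1, hGΓ, G.2.2⟩
      unfold boundaryFun
      refine Finset.sum_congr rfl fun x _ => ?_
      by_cases hx : x ∉ G.1 ∧ insert x G.1 ∈ sub Δ R (insert v S₀)
      · rw [dif_pos ⟨hx.1, gamma_sub_D hΔ hx.2⟩, dif_pos hx]
        simp only [hiz_def]
        rw [dif_pos hx.2]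
      · by_cases hx1 : x ∉ G.1 ∧ insert x G.1 ∈ sub Δ R S₀
        · rw [dif_pos hx1, dif_neg hx]
          simp only [hiz_def]
          rw [dif_neg (fun hins => hx ⟨hx1.1, hins⟩), mul_zero]
        · rw [dif_neg hx1, dif_neg hx]
    · show boundaryFun k _ p iz G = 0
      unfold boundaryFun
      refine Finset.sum_eq_zero fun x _ => ?_
      by_cases hx1 : x ∉ G.1 ∧ insert x G.1 ∈ sub Δ R S₀
      · rw [dif_pos hx1]
        simp only [hiz_def]
        rw [dif_neg, mul_zero]
        intro hins
        exact hGΓ (sub_isComplex hΔ R (insert v S₀) _ hins _ (Finset.subset_insert x G.1))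
      · rw [dif_neg hx1]
  by_cases hizb : iz ∈ boundaries k (sub Δ R S₀) p
  swap
  · exact Or.inl (not_subsingleton_of_cycle iz hizcyc hizb)
  right
  obtain ⟨w, hw⟩ := (mem_boundaries_iff iz).mp hizb
  set u : Chains k (sub Δ (insert v R) S₀) (p + 1) := fun G =>
    if hvG : v ∈ G.1 then
      epsk k v (G.1.erase v) * z ⟨G.1.erase v,
        (insert_memE_iff (Finset.notMem_erase v G.1)).mp
          (by rw [Finset.insert_erase hvG]; exact G.2.1),
        by
          have h2 := G.2.2
          have h3 : G.1.card = (G.1.erase v).card + 1 := by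
            rw [Finset.card_erase_of_mem hvG]
            have := Finset.card_pos.mpr ⟨v, hvG⟩
            omega
          rw [h3] at h2; push_cast at h2 ⊢; omega⟩
    else -(w ⟨G.1, (memE_iff_memD hvG).mp G.2.1, G.2.2⟩) with hu_def
  have hpsiu : psi Δ R S₀ v hvR (p + 1) p rfl u = z := by
    funext F
    have hvF : v ∉ F.1 := not_mem_of_gamma hvR F.2.1
    simp only [psi, hu_def]
    rw [dif_pos (Finset.mem_insert_self v F.1)]
    rw [chain_congr z (Finset.erase_insert hvF) (hG := F.2)]
    rw [Finset.erase_insert hvF, ← mul_assoc, epsk_mul_self, one_mul]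
  have hucyc : boundary k (sub Δ (insert v R) S₀) (p + 1) u = 0 := by
    refine funext fun G => ?_
    by_cases hvG : v ∈ G.1
    · have hA : G.1.erase v ∈ sub Δ R (insert v S₀) :=
        (insert_memE_iff (Finset.notMem_erase v G.1)).mp
          (by rw [Finset.insert_erase hvG]; exact G.2.1)
      have h3 : G.1.card = (G.1.erase v).card + 1 := by
        rw [Finset.card_erase_of_mem hvG]
        have := Finset.card_pos.mpr ⟨v, hvG⟩
        omega
      have hAc : (((G.1.erase v).card : ℕ) : ℤ) = (p - 1) + 1 := by
        have h2 := G.2.2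
        rw [h3] at h2; push_cast at h2 ⊢; omega
      have hL := boundary_vface Δ R S₀ v hvR (p + 1) p rfl u G.1 G.2.1 G.2.2 hvG hA hAc
      refine Eq.trans hL ?_
      rw [hpsiu, hz]
      simp
    · have hGD : G.1 ∈ sub Δ R S₀ := (memE_iff_memD hvG).mp G.2.1
      have hcardp : ((G.1.card : ℕ) : ℤ) = p + 1 := by
        have := G.2.2; push_cast at this ⊢; omega
      show boundaryFun k _ (p + 1) u G = 0
      unfold boundaryFun
      rw [← Finset.sum_erase_add _ _ (Finset.mem_univ v)]
      refine Eq.trans (congrArg₂ (· + ·)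
        (?_ : _ = -(boundary k (sub Δ R S₀) (p + 1) w ⟨G.1, hGD, G.2.2⟩))
        (?_ : _ = iz ⟨G.1, hGD, hcardp⟩)) ?_
      · rw [show boundary k (sub Δ R S₀) (p + 1) w ⟨G.1, hGD, G.2.2⟩
          = boundaryFun k (sub Δ R S₀) (p + 1) w ⟨G.1, hGD, G.2.2⟩ from rfl]
        unfold boundaryFun
        rw [← Finset.sum_erase_add Finset.univ _ (Finset.mem_univ v)]
        conv_rhs => rw [dif_neg (show ¬(v ∉ G.1 ∧ insert v G.1 ∈ sub Δ R S₀) from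
          fun hcc => hvR (hcc.2.1 (Finset.mem_insert_self v G.1)))]
        rw [add_zero, ← Finset.sum_neg_distrib]
        refine Finset.sum_congr rfl fun x hx => ?_
        have hxv : x ≠ v := (Finset.mem_erase.mp hx).1
        have hvins : v ∉ insert x G.1 := by simp [hvG, Ne.symm hxv]
        by_cases hcD : x ∉ G.1 ∧ insert x G.1 ∈ sub Δ R S₀
        · rw [dif_pos ⟨hcD.1, (memE_iff_memD hvins).mpr hcD.2⟩, dif_pos hcD]
          simp only [hu_def]
          rw [dif_neg hvins, mul_neg]
        · rw [dif_neg (fun hcE => hcD ⟨hcE.1, (memE_iff_memD hvins).mp hcE.2⟩),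
            dif_neg hcD, neg_zero]
      · by_cases hGΓ : G.1 ∈ sub Δ R (insert v S₀)
        · rw [dif_pos ⟨hvG, (insert_memE_iff hvG).mpr hGΓ⟩]
          simp only [hu_def, hiz_def]
          rw [dif_pos (Finset.mem_insert_self v G.1), dif_pos hGΓ]
          rw [chain_congr z (Finset.erase_insert hvG) (hG := ⟨hGΓ, hcardp⟩)]
          rw [Finset.erase_insert hvG]
          rw [show ((-1 : k) ^ (G.1.filter (fun y => y < v)).card) = epsk k v G.1 from rfl]
          rw [← mul_assoc, epsk_mul_self, one_mul]
        · rw [dif_neg (fun hcc => hGΓ ((insert_memE_iff hvG).mp hcc.2))]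
          simp only [hiz_def]
          rw [dif_neg hGΓ]
      · have hDb : boundary k (sub Δ R S₀) (p + 1) w ⟨G.1, hGD, G.2.2⟩
            = iz ⟨G.1, hGD, hcardp⟩ := by
          have hDbound := congrFun hw ⟨G.1, hGD, hcardp⟩
          exact (chainsCongr_apply _ _ _ hGD hcardp).symm.trans hDbound
        rw [hDb]
        exact neg_add_cancel _
  refine not_subsingleton_of_cycle u hucyc ?_
  intro hub
  apply hzb
  obtain ⟨c, hc⟩ := (mem_boundaries_iff u).mp hub
  rw [mem_boundaries_iff]
  refine ⟨-(psi Δ R S₀ v hvR (p + 1 + 1) (p + 1) rfl c), ?_⟩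
  funext F
  have hvF : v ∉ F.1 := not_mem_of_gamma hvR F.2.1
  have hFE : insert v F.1 ∈ sub Δ (insert v R) S₀ := (insert_memE_iff hvF).mpr F.2.1
  have hFc := F.2.2
  have pfu : ((insert v F.1).card : ℤ) = (p + 1) + 1 := by
    rw [Finset.card_insert_of_notMem hvF]; push_cast at hFc ⊢; omega
  have hc1' := congrFun hc ⟨insert v F.1, hFE, pfu⟩
  have hc1 : boundary k (sub Δ (insert v R) S₀) (p + 1 + 1) c
      ⟨insert v F.1, hFE, by rw [Finset.card_insert_of_notMem hvF]; push_cast at hFc ⊢; omega⟩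
      = u ⟨insert v F.1, hFE, pfu⟩ :=
    (chainsCongr_apply _ _ _ hFE pfu).symm.trans hc1'
  have hA : (insert v F.1).erase v ∈ sub Δ R (insert v S₀) := by
    rw [Finset.erase_insert hvF]; exact F.2.1
  have hAc : ((((insert v F.1).erase v).card : ℕ) : ℤ) = (p + 1 - 1) + 1 := by
    rw [Finset.erase_insert hvF]; push_cast at hFc ⊢; omega
  have hL := boundary_vface Δ R S₀ v hvR (p + 1 + 1) (p + 1) rfl c (insert v F.1) hFE
    (by rw [Finset.card_insert_of_notMem hvF]; push_cast at hFc ⊢; omega)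
    (Finset.mem_insert_self v F.1) hA hAc
  have hc2 := hL.symm.trans hc1
  simp only [hu_def] at hc2
  rw [dif_pos (Finset.mem_insert_self v F.1)] at hc2
  have pfc : ((F.1.card : ℕ) : ℤ) = (p + 1 - 1) + 1 := by push_cast at hFc ⊢; omega
  rw [chain_congr (boundary k (sub Δ R (insert v S₀)) (p + 1)
      (psi Δ R S₀ v hvR (p + 1 + 1) (p + 1) rfl c)) (Finset.erase_insert hvF)
      (hG := ⟨F.2.1, pfc⟩)] at hc2
  rw [chain_congr z (Finset.erase_insert hvF) (hG := F.2)] at hc2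
  rw [Finset.erase_insert hvF] at hc2
  have h4 : chainsCongr k (sub Δ R (insert v S₀)) (show p + 1 - 1 = p by ring)
      (boundary k (sub Δ R (insert v S₀)) (p + 1)
        (-(psi Δ R S₀ v hvR (p + 1 + 1) (p + 1) rfl c))) F
      = -(boundary k (sub Δ R (insert v S₀)) (p + 1)
          (psi Δ R S₀ v hvR (p + 1 + 1) (p + 1) rfl c) ⟨F.1, F.2.1, pfc⟩) := by
    rw [map_neg, map_neg, Pi.neg_apply]
    exact congrArg Neg.neg
      (chainsCongr_apply _ _ F.1 F.2.1 F.2.2)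
  rw [h4]
  set X := boundary k (sub Δ R (insert v S₀)) (p + 1)
    (psi Δ R S₀ v hvR (p + 1 + 1) (p + 1) rfl c) ⟨F.1, F.2.1, pfc⟩ with hX
  set e := epsk k v F.1 with he_def
  have he := epsk_mul_self (k := k) v F.1
  have hc3 : -(e * X) = e * z F := hc2
  rw [← he_def] at he
  linear_combination e * hc3 + (X + z F) * he

end Step

section Main
set_option linter.unusedSectionVars false
variable {k : Type} [Field k] {n : ℕ}

lemma main_aux (Δ : Set (Finset (Fin n))) (hΔ : IsComplex Δ) :
    ∀ m : ℕ, ∀ R S T : Finset (Fin n), ∀ p : ℤ,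
      Disjoint R S → Disjoint R T → Disjoint S T → R ∪ S ∪ T = Finset.univ →
      ∀ S' : Finset (Fin n), S' ⊆ S → (S \ S').card = m →
      ¬ Subsingleton (ReducedHomology k (sub Δ R S) p) →
      ∃ R' T' : Finset (Fin n), R ⊆ R' ∧ T ⊆ T' ∧
        Disjoint R' S' ∧ Disjoint R' T' ∧ Disjoint S' T' ∧
        R' ∪ S' ∪ T' = Finset.univ ∧
        ¬ Subsingleton (ReducedHomology k (sub Δ R' S') (p + ((R' \ R).card : ℤ))) := by
  intro m
  induction m with
  | zero =>
    intro R S T p hRS hRT hST hcov S' hS' hcard h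
    have hSS : S = S' := by
      refine Finset.Subset.antisymm ?_ hS'
      intro a ha
      by_contra hna
      exact absurd (Finset.card_eq_zero.mp hcard ▸ Finset.mem_sdiff.mpr ⟨ha, hna⟩)
        (Finset.notMem_empty a)
    refine ⟨R, T, Finset.Subset.refl R, Finset.Subset.refl T, hSS ▸ hRS, hRT, hSS ▸ hST,
      hSS ▸ hcov, ?_⟩
    have h' := h
    rw [hSS] at h'
    rw [Finset.sdiff_self]
    simpa using h'
  | succ m ih =>
    intro R S T p hRS hRT hST hcov S' hS' hcard h
    have hne : (S \ S').Nonempty := by rw [← Finset.card_pos, hcard]; omega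
    obtain ⟨v, hv⟩ := hne
    have hvS : v ∈ S := (Finset.mem_sdiff.mp hv).1
    have hvS' : v ∉ S' := (Finset.mem_sdiff.mp hv).2
    have hvR : v ∉ R := fun hmem => (Finset.disjoint_left.mp hRS) hmem hvS
    have hvT : v ∉ T := fun hmem => (Finset.disjoint_left.mp hST) hvS hmem
    have hSid : insert v (S.erase v) = S := Finset.insert_erase hvS
    have h' : ¬ Subsingleton (ReducedHomology k (sub Δ R (insert v (S.erase v))) p) := by
      rw [hSid]; exact h
    have hcard' : ((S.erase v) \ S').card = m := by
      have hset : (S.erase v) \ S' = (S \ S').erase v := by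
        ext a
        simp only [Finset.mem_sdiff, Finset.mem_erase]
        tauto
      rw [hset, Finset.card_erase_of_mem hv, hcard]
      omega
    have hS'e : S' ⊆ S.erase v := fun a ha =>
      Finset.mem_erase.mpr ⟨fun hav => hvS' (hav ▸ ha), hS' ha⟩
    rcases step (k := k) Δ hΔ R (S.erase v) v hvR p h' with hcase | hcase
    · have hcov1 : R ∪ S.erase v ∪ insert v T = Finset.univ := by
        rw [← hcov]
        ext a
        by_cases hav : a = v
        · subst hav
          simp [hvS]
        · simp [Finset.mem_union, Finset.mem_insert, Finset.mem_erase, hav]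
      obtain ⟨R', T', hRR', hTT', h1, h2, h3, h4, h5⟩ :=
        ih R (S.erase v) (insert v T) p
          (hRS.mono_right (Finset.erase_subset v S))
          (Finset.disjoint_insert_right.mpr ⟨hvR, hRT⟩)
          (Finset.disjoint_insert_right.mpr
            ⟨Finset.notMem_erase v S, hST.mono_left (Finset.erase_subset v S)⟩)
          hcov1 S' hS'e hcard' hcase
      exact ⟨R', T', hRR', (Finset.subset_insert v T).trans hTT', h1, h2, h3, h4, h5⟩
    · have hcov2 : insert v R ∪ S.erase v ∪ T = Finset.univ := by
        rw [← hcov]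
        ext a
        by_cases hav : a = v
        · subst hav
          simp [hvS]
        · simp [Finset.mem_union, Finset.mem_insert, Finset.mem_erase, hav]
      obtain ⟨R', T', hRR', hTT', h1, h2, h3, h4, h5⟩ :=
        ih (insert v R) (S.erase v) T (p + 1)
          (Finset.disjoint_insert_left.mpr
            ⟨Finset.notMem_erase v S, hRS.mono_right (Finset.erase_subset v S)⟩)
          (Finset.disjoint_insert_left.mpr ⟨hvT, hRT⟩)
          (hST.mono_left (Finset.erase_subset v S))
          hcov2 S' hS'e hcard' hcase
      refine ⟨R', T', (Finset.subset_insert v R).trans hRR', hTT', h1, h2, h3, h4, ?_⟩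
      have hvR' : v ∈ R' := hRR' (Finset.mem_insert_self v R)
      have hkey : R' \ R = insert v (R' \ insert v R) := by
        ext a
        simp only [Finset.mem_sdiff, Finset.mem_insert]
        constructor
        · rintro ⟨h1, h2⟩
          rcases eq_or_ne a v with hav | hav
          · exact Or.inl hav
          · exact Or.inr ⟨h1, by simp [Finset.mem_insert, hav, h2]⟩
        · rintro (hav | ⟨ha1, ha2⟩)
          · subst hav
            exact ⟨hvR', hvR⟩
          · exact ⟨ha1, fun ha => ha2 (Or.inr ha)⟩
      have hcd : (p + ((R' \ R).card : ℤ)) = (p + 1) + (((R' \ insert v R).card : ℕ) : ℤ) := by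
        rw [hkey, Finset.card_insert_of_notMem (by simp)]
        push_cast
        ring
      rw [hcd]
      exact h5

end Main

/-- reducing `S`: nonvanishing of `H̃_p(Δ_R^{S,T})` propagates to a
partition with prescribed smaller `S'`, with degree shift `p' - p = |R' \ R|`. -/
theorem stmt8 (k : Type) [Field k] {n : ℕ} (Δ : Set (Finset (Fin n)))
    (hΔ : IsComplex Δ) (R S T : Finset (Fin n))
    (hRS : Disjoint R S) (hRT : Disjoint R T) (hST : Disjoint S T)
    (hcov : R ∪ S ∪ T = Finset.univ) (hS : S.Nonempty) (p : ℤ)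
    (h : ¬ Subsingleton (ReducedHomology k (sub Δ R S) p))
    (S' : Finset (Fin n)) (hS' : S' ⊆ S) :
    ∃ R' T' : Finset (Fin n), R ⊆ R' ∧ T ⊆ T' ∧
      Disjoint R' S' ∧ Disjoint R' T' ∧ Disjoint S' T' ∧
      R' ∪ S' ∪ T' = Finset.univ ∧
      ¬ Subsingleton (ReducedHomology k (sub Δ R' S')
        (p + ((R' \ R).card : ℤ))) := by
  exact main_aux Δ hΔ ((S \ S').card) R S T p hRS hRT hST hcov S' hS' rfl h

end SCx
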